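/- Let π₅ ⊆ Λ²W* be the subspace spanned by e₁∧e₄ + e₂∧e₃, e₁∧e₅ + e₂∧e₄, e₂∧e₅ + e₃∧e₄. Let A ⊆ Λ²W* be a linear subspace such that every ω ∈ A has rank at most 4, and suppose A contains g·π₅ for some g ∈ GL(W). Then there exists a nonzero vector u ∈ W such that u ∈ ker(α) for every α ∈ A; in particular A is not semistable. -/

import Mathlib

open Matrix

noncomputable section

abbrev W : Type := Fin 6 → ℂ
abbrev Form : Type := Matrix (Fin 6) (Fin 6) ℂ

/-- The skew-symmetric bilinear form associated to a matrix: `ω(u,v) = uᵀ M v`. -/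
def Form.apply (M : Form) (u v : W) : ℂ := u ⬝ᵥ M *ᵥ v

/-- A matrix represents a skew-symmetric (alternating) bilinear form iff `Mᵀ = -M`. -/
def Form.IsSkew (M : Form) : Prop := Mᵀ = -M

/-- Standard basis vectors of `W` (also used as the dual basis of `W*`). -/
def e (i : Fin 6) : Fin 6 → ℂ := Pi.single i 1

/-- Wedge of two covectors: `(φ∧ψ)(u,u') = φ(u)ψ(u') − ψ(u)φ(u')`. -/
def wedge (φ ψ : Fin 6 → ℂ) : Form := vecMulVec φ ψ - vecMulVec ψ φ

/-- Kernel of the linear map `u ↦ ω(u,·)`, i.e. of `u ↦ Mᵀ u`. -/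
def Form.kernel (M : Form) : Submodule ℂ W := LinearMap.ker (Matrix.mulVecLin Mᵀ)

/-- The action of `g ∈ GL(W)` on forms: `(g·ω)(u,u') = ω(gu,gu')`, as a linear map on forms. -/
def actLin (g : Matrix (Fin 6) (Fin 6) ℂ) : Form →ₗ[ℂ] Form where
  toFun M := gᵀ * M * g
  map_add' M N := by simp [add_mul, mul_add]
  map_smul' c M := by simp [mul_smul_comm, smul_mul_assoc]

/-- The geometric criterion for non-stability (Theorem 2.3(2)). -/
def Nonstable (A : Submodule ℂ Form) : Prop :=
  ∃ s : ℕ, s ∈ ({1, 2, 3} : Set ℕ) ∧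
    ∃ U U' : Submodule ℂ W, U ≤ U' ∧
      Module.finrank ℂ U = s ∧ Module.finrank ℂ U' = 6 - s ∧
      ∀ M ∈ A, ∀ u ∈ U, ∀ u' ∈ U', Form.apply M u u' = 0

/-- The geometric criterion for non-semistability (Theorem 2.3(1)). -/
def NonSemistable (A : Submodule ℂ Form) : Prop :=
  ∃ s : ℕ, s ∈ ({1, 2, 3} : Set ℕ) ∧
    ∃ U U' : Submodule ℂ W, U ≤ U' ∧
      Module.finrank ℂ U = s ∧ Module.finrank ℂ U' = 7 - s ∧
      ∀ M ∈ A, ∀ u ∈ U, ∀ u' ∈ U', Form.apply M u u' = 0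

/-- The plane `π_g` of general type. -/
def pi_g : Submodule ℂ Form :=
  Submodule.span ℂ {wedge (e 0) (e 3) + wedge (e 1) (e 4),
    wedge (e 0) (e 5) + wedge (e 2) (e 4),
    wedge (e 1) (e 5) - wedge (e 2) (e 3)}


/-- The plane `π₅`. -/
def pi_5 : Submodule ℂ Form :=
  Submodule.span ℂ {wedge (e 0) (e 3) + wedge (e 1) (e 2),
    wedge (e 0) (e 4) + wedge (e 1) (e 3),
    wedge (e 1) (e 4) + wedge (e 2) (e 3)}


set_option maxRecDepth 10000

lemma fs1 : (Fin.succ 2 : Fin 5) = 3 := rfl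
lemma fs2 : ((2 : Fin 4).succ.succ : Fin 6) = 4 := rfl
lemma fs3 : (Fin.castSucc 2 : Fin 5) = 2 := rfl
lemma fs4 : ((2 : Fin 4).castSucc.succ : Fin 6) = 3 := rfl
lemma fs5 : (Fin.succ 2 : Fin 4) = 3 := rfl
lemma fs6 : (Fin.castSucc 2 : Fin 4) = 2 := rfl
lemma fs7 : (Fin.succ 3 : Fin 5) = 4 := rfl
lemma fs8 : (Fin.castSucc 3 : Fin 5) = 3 := rfl
lemma fs9 : ((3 : Fin 4).castSucc.succ : Fin 6) = 4 := rfl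

set_option maxHeartbeats 4000000 in
theorem det_fin_five (A : Matrix (Fin 5) (Fin 5) ℂ) : A.det =
    A 0 0*A 1 1*A 2 2*A 3 3*A 4 4 - A 0 0*A 1 1*A 2 2*A 3 4*A 4 3 - A 0 0*A 1 1*A 2 3*A 3 2*A 4 4 + A 0 0*A 1 1*A 2 3*A 3 4*A 4 2 + A 0 0*A 1 1*A 2 4*A 3 2*A 4 3 - A 0 0*A 1 1*A 2 4*A 3 3*A 4 2 - A 0 0*A 1 2*A 2 1*A 3 3*A 4 4 + A 0 0*A 1 2*A 2 1*A 3 4*A 4 3 + A 0 0*A 1 2*A 2 3*A 3 1*A 4 4 - A 0 0*A 1 2*A 2 3*A 3 4*A 4 1 - A 0 0*A 1 2*A 2 4*A 3 1*A 4 3 + A 0 0*A 1 2*A 2 4*A 3 3*A 4 1 + A 0 0*A 1 3*A 2 1*A 3 2*A 4 4 - A 0 0*A 1 3*A 2 1*A 3 4*A 4 2 - A 0 0*A 1 3*A 2 2*A 3 1*A 4 4 + A 0 0*A 1 3*A 2 2*A 3 4*A 4 1 + A 0 0*A 1 3*A 2 4*A 3 1*A 4 2 - A 0 0*A 1 3*A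 2 4*A 3 2*A 4 1 - A 0 0*A 1 4*A 2 1*A 3 2*A 4 3 + A 0 0*A 1 4*A 2 1*A 3 3*A 4 2 + A 0 0*A 1 4*A 2 2*A 3 1*A 4 3 - A 0 0*A 1 4*A 2 2*A 3 3*A 4 1 - A 0 0*A 1 4*A 2 3*A 3 1*A 4 2 + A 0 0*A 1 4*A 2 3*A 3 2*A 4 1 - A 0 1*A 1 0*A 2 2*A 3 3*A 4 4 + A 0 1*A 1 0*A 2 2*A 3 4*A 4 3 + A 0 1*A 1 0*A 2 3*A 3 2*A 4 4 - A 0 1*A 1 0*A 2 3*A 3 4*A 4 2 - A 0 1*A 1 0*A 2 4*A 3 2*A 4 3 + A 0 1*A 1 0*A 2 4*A 3 3*A 4 2 + A 0 1*A 1 2*A 2 0*A 3 3*A 4 4 - A 0 1*A 1 2*A 2 0*A 3 4*A 4 3 - A 0 1*A 1 2*A 2 3*A 3 0*A 4 4 + A 0 1*A 1 2*A 2 3*A 3 4*A 4 0 + A 0 1*A 1 2*A 2 4*A 3 0*A 4 3 - A 0 1*A 1 2*A 2 4*A 3 3*A 4 0 - A 0 1*A 1 3*A 2 0*A 3 2*A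 4 4 + A 0 1*A 1 3*A 2 0*A 3 4*A 4 2 + A 0 1*A 1 3*A 2 2*A 3 0*A 4 4 - A 0 1*A 1 3*A 2 2*A 3 4*A 4 0 - A 0 1*A 1 3*A 2 4*A 3 0*A 4 2 + A 0 1*A 1 3*A 2 4*A 3 2*A 4 0 + A 0 1*A 1 4*A 2 0*A 3 2*A 4 3 - A 0 1*A 1 4*A 2 0*A 3 3*A 4 2 - A 0 1*A 1 4*A 2 2*A 3 0*A 4 3 + A 0 1*A 1 4*A 2 2*A 3 3*A 4 0 + A 0 1*A 1 4*A 2 3*A 3 0*A 4 2 - A 0 1*A 1 4*A 2 3*A 3 2*A 4 0 + A 0 2*A 1 0*A 2 1*A 3 3*A 4 4 - A 0 2*A 1 0*A 2 1*A 3 4*A 4 3 - A 0 2*A 1 0*A 2 3*A 3 1*A 4 4 + A 0 2*A 1 0*A 2 3*A 3 4*A 4 1 + A 0 2*A 1 0*A 2 4*A 3 1*A 4 3 - A 0 2*A 1 0*A 2 4*A 3 3*A 4 1 - A 0 2*A 1 1*A 2 0*A 3 3*A 4 4 + A 0 2*A 1 1*A 2 0*A 3 4*A 4 3 + A 0 2*A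 1 1*A 2 3*A 3 0*A 4 4 - A 0 2*A 1 1*A 2 3*A 3 4*A 4 0 - A 0 2*A 1 1*A 2 4*A 3 0*A 4 3 + A 0 2*A 1 1*A 2 4*A 3 3*A 4 0 + A 0 2*A 1 3*A 2 0*A 3 1*A 4 4 - A 0 2*A 1 3*A 2 0*A 3 4*A 4 1 - A 0 2*A 1 3*A 2 1*A 3 0*A 4 4 + A 0 2*A 1 3*A 2 1*A 3 4*A 4 0 + A 0 2*A 1 3*A 2 4*A 3 0*A 4 1 - A 0 2*A 1 3*A 2 4*A 3 1*A 4 0 - A 0 2*A 1 4*A 2 0*A 3 1*A 4 3 + A 0 2*A 1 4*A 2 0*A 3 3*A 4 1 + A 0 2*A 1 4*A 2 1*A 3 0*A 4 3 - A 0 2*A 1 4*A 2 1*A 3 3*A 4 0 - A 0 2*A 1 4*A 2 3*A 3 0*A 4 1 + A 0 2*A 1 4*A 2 3*A 3 1*A 4 0 - A 0 3*A 1 0*A 2 1*A 3 2*A 4 4 + A 0 3*A 1 0*A 2 1*A 3 4*A 4 2 + A 0 3*A 1 0*A 2 2*A 3 1*A 4 4 - A 0 3*A 1 0*A 2 2*A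 3 4*A 4 1 - A 0 3*A 1 0*A 2 4*A 3 1*A 4 2 + A 0 3*A 1 0*A 2 4*A 3 2*A 4 1 + A 0 3*A 1 1*A 2 0*A 3 2*A 4 4 - A 0 3*A 1 1*A 2 0*A 3 4*A 4 2 - A 0 3*A 1 1*A 2 2*A 3 0*A 4 4 + A 0 3*A 1 1*A 2 2*A 3 4*A 4 0 + A 0 3*A 1 1*A 2 4*A 3 0*A 4 2 - A 0 3*A 1 1*A 2 4*A 3 2*A 4 0 - A 0 3*A 1 2*A 2 0*A 3 1*A 4 4 + A 0 3*A 1 2*A 2 0*A 3 4*A 4 1 + A 0 3*A 1 2*A 2 1*A 3 0*A 4 4 - A 0 3*A 1 2*A 2 1*A 3 4*A 4 0 - A 0 3*A 1 2*A 2 4*A 3 0*A 4 1 + A 0 3*A 1 2*A 2 4*A 3 1*A 4 0 + A 0 3*A 1 4*A 2 0*A 3 1*A 4 2 - A 0 3*A 1 4*A 2 0*A 3 2*A 4 1 - A 0 3*A 1 4*A 2 1*A 3 0*A 4 2 + A 0 3*A 1 4*A 2 1*A 3 2*A 4 0 + A 0 3*A 1 4*A 2 2*A 3 0*A 4 1 -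 A 0 3*A 1 4*A 2 2*A 3 1*A 4 0 + A 0 4*A 1 0*A 2 1*A 3 2*A 4 3 - A 0 4*A 1 0*A 2 1*A 3 3*A 4 2 - A 0 4*A 1 0*A 2 2*A 3 1*A 4 3 + A 0 4*A 1 0*A 2 2*A 3 3*A 4 1 + A 0 4*A 1 0*A 2 3*A 3 1*A 4 2 - A 0 4*A 1 0*A 2 3*A 3 2*A 4 1 - A 0 4*A 1 1*A 2 0*A 3 2*A 4 3 + A 0 4*A 1 1*A 2 0*A 3 3*A 4 2 + A 0 4*A 1 1*A 2 2*A 3 0*A 4 3 - A 0 4*A 1 1*A 2 2*A 3 3*A 4 0 - A 0 4*A 1 1*A 2 3*A 3 0*A 4 2 + A 0 4*A 1 1*A 2 3*A 3 2*A 4 0 + A 0 4*A 1 2*A 2 0*A 3 1*A 4 3 - A 0 4*A 1 2*A 2 0*A 3 3*A 4 1 - A 0 4*A 1 2*A 2 1*A 3 0*A 4 3 + A 0 4*A 1 2*A 2 1*A 3 3*A 4 0 + A 0 4*A 1 2*A 2 3*A 3 0*A 4 1 - A 0 4*A 1 2*A 2 3*A 3 1*A 4 0 - A 0 4*A 1 3*A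 2 0*A 3 1*A 4 2 + A 0 4*A 1 3*A 2 0*A 3 2*A 4 1 + A 0 4*A 1 3*A 2 1*A 3 0*A 4 2 - A 0 4*A 1 3*A 2 1*A 3 2*A 4 0 - A 0 4*A 1 3*A 2 2*A 3 0*A 4 1 + A 0 4*A 1 3*A 2 2*A 3 1*A 4 0 := by
  simp [Matrix.det_succ_row_zero, Fin.sum_univ_succ]
  simp (config := {decide := true}) [Fin.succAbove, Fin.lt_def]
  ring

set_option maxHeartbeats 1000000 in
theorem det5e (v00 v01 v02 v03 v04 v10 v11 v12 v13 v14 v20 v21 v22 v23 v24 v30 v31 v32 v33 v34 v40 v41 v42 v43 v44 : ℂ) :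
    (!![v00, v01, v02, v03, v04; v10, v11, v12, v13, v14; v20, v21, v22, v23, v24; v30, v31, v32, v33, v34; v40, v41, v42, v43, v44]).det = v00*v11*v22*v33*v44 - v00*v11*v22*v34*v43 - v00*v11*v23*v32*v44 + v00*v11*v23*v34*v42 + v00*v11*v24*v32*v43 - v00*v11*v24*v33*v42 - v00*v12*v21*v33*v44 + v00*v12*v21*v34*v43 + v00*v12*v23*v31*v44 - v00*v12*v23*v34*v41 - v00*v12*v24*v31*v43 + v00*v12*v24*v33*v41 + v00*v13*v21*v32*v44 - v00*v13*v21*v34*v42 - v00*v13*v22*v31*v44 + v00*v13*v22*v34*v41 + v00*v13*v24*v31*v42 - v00*v13*v24*v32*v41 - v00*v14*v21*v32*v43 + v00*v14*v21*v33*v42 + v00*v14*v22*v31*v43 - v00*v14*v22*v33*v41 - v00*v14*v23*v31*v42 + v00*v14*v23*v32*v41 - v01*v10*v22*v33*v44 + v01*v10*v22*v34*v43 + v01*v10*v23*v32*v44 - v01*v10*v23*v34*v42 - v01*v10*v24*v32*v43 + v01*v10*v24*v33*v42 + v01*v12*v20*v33*v44 - v01*v12*v20*v34*v43 - v01*v12*v23*v30*v44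 + v01*v12*v23*v34*v40 + v01*v12*v24*v30*v43 - v01*v12*v24*v33*v40 - v01*v13*v20*v32*v44 + v01*v13*v20*v34*v42 + v01*v13*v22*v30*v44 - v01*v13*v22*v34*v40 - v01*v13*v24*v30*v42 + v01*v13*v24*v32*v40 + v01*v14*v20*v32*v43 - v01*v14*v20*v33*v42 - v01*v14*v22*v30*v43 + v01*v14*v22*v33*v40 + v01*v14*v23*v30*v42 - v01*v14*v23*v32*v40 + v02*v10*v21*v33*v44 - v02*v10*v21*v34*v43 - v02*v10*v23*v31*v44 + v02*v10*v23*v34*v41 + v02*v10*v24*v31*v43 - v02*v10*v24*v33*v41 - v02*v11*v20*v33*v44 + v02*v11*v20*v34*v43 + v02*v11*v23*v30*v44 - v02*v11*v23*v34*v40 - v02*v11*v24*v30*v43 + v02*v11*v24*v33*v40 + v02*v13*v20*v31*v44 - v02*v13*v20*v34*v41 - v02*v13*v21*v30*v44 + v02*v13*v21*v34*v40 + v02*v13*v24*v30*v41 - v02*v13*v24*v31*v40 - v02*v14*v20*v31*v43 + v02*v14*v20*v33*v41 + v02*v14*v21*v30*v43 - v02*v14*v21*v33*v40 - v02*v14*v23*v30*v41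 + v02*v14*v23*v31*v40 - v03*v10*v21*v32*v44 + v03*v10*v21*v34*v42 + v03*v10*v22*v31*v44 - v03*v10*v22*v34*v41 - v03*v10*v24*v31*v42 + v03*v10*v24*v32*v41 + v03*v11*v20*v32*v44 - v03*v11*v20*v34*v42 - v03*v11*v22*v30*v44 + v03*v11*v22*v34*v40 + v03*v11*v24*v30*v42 - v03*v11*v24*v32*v40 - v03*v12*v20*v31*v44 + v03*v12*v20*v34*v41 + v03*v12*v21*v30*v44 - v03*v12*v21*v34*v40 - v03*v12*v24*v30*v41 + v03*v12*v24*v31*v40 + v03*v14*v20*v31*v42 - v03*v14*v20*v32*v41 - v03*v14*v21*v30*v42 + v03*v14*v21*v32*v40 + v03*v14*v22*v30*v41 - v03*v14*v22*v31*v40 + v04*v10*v21*v32*v43 - v04*v10*v21*v33*v42 - v04*v10*v22*v31*v43 + v04*v10*v22*v33*v41 + v04*v10*v23*v31*v42 - v04*v10*v23*v32*v41 - v04*v11*v20*v32*v43 + v04*v11*v20*v33*v42 + v04*v11*v22*v30*v43 - v04*v11*v22*v33*v40 - v04*v11*v23*v30*v42 + v04*v11*v23*v32*v40 + v04*v12*v20*v31*v43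 - v04*v12*v20*v33*v41 - v04*v12*v21*v30*v43 + v04*v12*v21*v33*v40 + v04*v12*v23*v30*v41 - v04*v12*v23*v31*v40 - v04*v13*v20*v31*v42 + v04*v13*v20*v32*v41 + v04*v13*v21*v30*v42 - v04*v13*v21*v32*v40 - v04*v13*v22*v30*v41 + v04*v13*v22*v31*v40 := by
  rw [det_fin_five]
  simp [Matrix.cons_val_zero, Matrix.cons_val_one, Matrix.cons_val_two, Matrix.cons_val_three,
    Matrix.cons_val_four, Matrix.head_cons, Matrix.head_fin_const]

def O1 : Form := wedge (e 0) (e 3) + wedge (e 1) (e 2)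
def O2 : Form := wedge (e 0) (e 4) + wedge (e 1) (e 3)
def O3 : Form := wedge (e 1) (e 4) + wedge (e 2) (e 3)
def O4 : Form := O1 + O2
def O5 : Form := O2 + O3

lemma O1_mem : O1 ∈ pi_5 := Submodule.subset_span (by left; rfl)
lemma O2_mem : O2 ∈ pi_5 := Submodule.subset_span (by right; left; rfl)
lemma O3_mem : O3 ∈ pi_5 := Submodule.subset_span (by right; right; rfl)
lemma O4_mem : O4 ∈ pi_5 := Submodule.add_mem _ O1_mem O2_mem
lemma O5_mem : O5 ∈ pi_5 := Submodule.add_mem _ O2_mem O3_mem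

set_option maxHeartbeats 1000000 in
lemma B1 (M : Form) (s : ℂ) : (s • O1 + M).submatrix ![0,1,2,3,5] ![0,1,2,3,4] =
  !![M 0 0, M 0 1, M 0 2, s + M 0 3, M 0 4;
     M 1 0, M 1 1, s + M 1 2, M 1 3, M 1 4;
     M 2 0, -s + M 2 1, M 2 2, M 2 3, M 2 4;
     -s + M 3 0, M 3 1, M 3 2, M 3 3, M 3 4;
     M 5 0, M 5 1, M 5 2, M 5 3, M 5 4] := by
  ext i j
  fin_cases i <;> fin_cases j <;>
    simp [O1, O2, O3, O4, O5, wedge, e, Matrix.vecMulVec_apply, Pi.single_apply] <;> ring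

set_option maxHeartbeats 1000000 in
lemma B2 (M : Form) (s : ℂ) : (s • O2 + M).submatrix ![0,1,3,4,5] ![0,1,2,3,4] =
  !![M 0 0, M 0 1, M 0 2, M 0 3, s + M 0 4;
     M 1 0, M 1 1, M 1 2, s + M 1 3, M 1 4;
     M 3 0, -s + M 3 1, M 3 2, M 3 3, M 3 4;
     -s + M 4 0, M 4 1, M 4 2, M 4 3, M 4 4;
     M 5 0, M 5 1, M 5 2, M 5 3, M 5 4] := by
  ext i j
  fin_cases i <;> fin_cases j <;>
    simp [O1, O2, O3, O4, O5, wedge, e, Matrix.vecMulVec_apply, Pi.single_apply] <;> ring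

set_option maxHeartbeats 1000000 in
lemma B3 (M : Form) (s : ℂ) : (s • O3 + M).submatrix ![1,2,3,4,5] ![0,1,2,3,4] =
  !![M 1 0, M 1 1, M 1 2, M 1 3, s + M 1 4;
     M 2 0, M 2 1, M 2 2, s + M 2 3, M 2 4;
     M 3 0, M 3 1, -s + M 3 2, M 3 3, M 3 4;
     M 4 0, -s + M 4 1, M 4 2, M 4 3, M 4 4;
     M 5 0, M 5 1, M 5 2, M 5 3, M 5 4] := by
  ext i j
  fin_cases i <;> fin_cases j <;>
    simp [O1, O2, O3, O4, O5, wedge, e, Matrix.vecMulVec_apply, Pi.single_apply] <;> ring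

set_option maxHeartbeats 1000000 in
lemma B4 (M : Form) (s : ℂ) : (s • O4 + M).submatrix ![0,1,2,3,5] ![0,1,2,3,4] =
  !![M 0 0, M 0 1, M 0 2, s + M 0 3, s + M 0 4;
     M 1 0, M 1 1, s + M 1 2, s + M 1 3, M 1 4;
     M 2 0, -s + M 2 1, M 2 2, M 2 3, M 2 4;
     -s + M 3 0, -s + M 3 1, M 3 2, M 3 3, M 3 4;
     M 5 0, M 5 1, M 5 2, M 5 3, M 5 4] := by
  ext i j
  fin_cases i <;> fin_cases j <;>
    simp [O1, O2, O3, O4, O5, wedge, e, Matrix.vecMulVec_apply, Pi.single_apply] <;> ring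

set_option maxHeartbeats 1000000 in
lemma B5 (M : Form) (s : ℂ) : (s • O5 + M).submatrix ![1,2,3,4,5] ![0,1,2,3,4] =
  !![M 1 0, M 1 1, M 1 2, s + M 1 3, s + M 1 4;
     M 2 0, M 2 1, M 2 2, s + M 2 3, M 2 4;
     M 3 0, -s + M 3 1, -s + M 3 2, M 3 3, M 3 4;
     -s + M 4 0, -s + M 4 1, M 4 2, M 4 3, M 4 4;
     M 5 0, M 5 1, M 5 2, M 5 3, M 5 4] := by
  ext i j
  fin_cases i <;> fin_cases j <;>
    simp [O1, O2, O3, O4, O5, wedge, e, Matrix.vecMulVec_apply, Pi.single_apply] <;> ring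


lemma submatrix_rank_le (A : Form) (r c : Fin 5 → Fin 6) :
    (A.submatrix r c).rank ≤ A.rank := by
  have h : ((1 : Matrix (Fin 6) (Fin 6) ℂ).submatrix r (Equiv.refl (Fin 6))) * A *
      ((1 : Matrix (Fin 6) (Fin 6) ℂ).submatrix (Equiv.refl (Fin 6)) c) = A.submatrix r c := by
    rw [Matrix.one_submatrix_mul, Matrix.mul_submatrix_one]
    simp
  calc (A.submatrix r c).rank
      = (((1 : Matrix (Fin 6) (Fin 6) ℂ).submatrix r (Equiv.refl (Fin 6))) * A *
        ((1 : Matrix (Fin 6) (Fin 6) ℂ).submatrix (Equiv.refl (Fin 6)) c)).rank := by rw [h]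
    _ ≤ (((1 : Matrix (Fin 6) (Fin 6) ℂ).submatrix r (Equiv.refl (Fin 6))) * A).rank :=
        Matrix.rank_mul_le_left _ _
    _ ≤ A.rank := Matrix.rank_mul_le_right _ _

lemma submatrix_det_zero (A : Form) (h : A.rank ≤ 4) (r c : Fin 5 → Fin 6) :
    (A.submatrix r c).det = 0 := by
  by_contra hd
  have h1 : (A.submatrix r c).rank = 5 := by
    have hu : IsUnit (A.submatrix r c) :=
      (Matrix.isUnit_iff_isUnit_det _).mpr (Ne.isUnit hd)
    simpa using Matrix.rank_of_isUnit _ hu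
  have h2 := (submatrix_rank_le A r c).trans h
  omega

set_option maxHeartbeats 4000000 in
lemma row5_zero (M : Form) (hsk : ∀ i j : Fin 6, M j i = -M i j)
    (h1 : ∀ s : ℂ, ((s • O1 + M).submatrix ![0,1,2,3,5] ![0,1,2,3,4]).det = 0)
    (h2 : ∀ s : ℂ, ((s • O2 + M).submatrix ![0,1,3,4,5] ![0,1,2,3,4]).det = 0)
    (h3 : ∀ s : ℂ, ((s • O3 + M).submatrix ![1,2,3,4,5] ![0,1,2,3,4]).det = 0)
    (h4 : ∀ s : ℂ, ((s • O4 + M).submatrix ![0,1,2,3,5] ![0,1,2,3,4]).det = 0)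
    (h5 : ∀ s : ℂ, ((s • O5 + M).submatrix ![1,2,3,4,5] ![0,1,2,3,4]).det = 0) :
    ∀ j : Fin 6, M 5 j = 0 := by
  have z0 : M 0 0 = 0 := by linear_combination hsk 0 0 / 2
  have z1 : M 1 1 = 0 := by linear_combination hsk 1 1 / 2
  have z2 : M 2 2 = 0 := by linear_combination hsk 2 2 / 2
  have z3 : M 3 3 = 0 := by linear_combination hsk 3 3 / 2
  have z4 : M 4 4 = 0 := by linear_combination hsk 4 4 / 2
  have z5 : M 5 5 = 0 := by linear_combination hsk 5 5 / 2
  have t10 : M 1 0 = -M 0 1 := hsk 0 1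
  have t20 : M 2 0 = -M 0 2 := hsk 0 2
  have t30 : M 3 0 = -M 0 3 := hsk 0 3
  have t40 : M 4 0 = -M 0 4 := hsk 0 4
  have t50 : M 5 0 = -M 0 5 := hsk 0 5
  have t21 : M 2 1 = -M 1 2 := hsk 1 2
  have t31 : M 3 1 = -M 1 3 := hsk 1 3
  have t41 : M 4 1 = -M 1 4 := hsk 1 4
  have t51 : M 5 1 = -M 1 5 := hsk 1 5
  have t32 : M 3 2 = -M 2 3 := hsk 2 3
  have t42 : M 4 2 = -M 2 4 := hsk 2 4
  have t52 : M 5 2 = -M 2 5 := hsk 2 5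
  have t43 : M 4 3 = -M 3 4 := hsk 3 4
  have t53 : M 5 3 = -M 3 5 := hsk 3 5
  have t54 : M 5 4 = -M 4 5 := hsk 4 5
  have h1a := h1 2
  have h1b := h1 (-2)
  have h1c := h1 1
  have h1d := h1 (-1)
  have h1e := h1 0
  rw [B1 M 2] at h1a
  rw [B1 M (-2)] at h1b
  rw [B1 M 1] at h1c
  rw [B1 M (-1)] at h1d
  rw [B1 M 0] at h1e
  rw [det5e] at h1a h1b h1c h1d h1e
  simp only [t10, t20, t30, t40, t50, t21, t31, t41, t51, t32, t42, t52, t43, t53, t54, z0, z1, z2, z3, z4, z5] at h1a h1b h1c h1d h1e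
  have h2a := h2 2
  have h2b := h2 (-2)
  have h2c := h2 1
  have h2d := h2 (-1)
  have h2e := h2 0
  rw [B2 M 2] at h2a
  rw [B2 M (-2)] at h2b
  rw [B2 M 1] at h2c
  rw [B2 M (-1)] at h2d
  rw [B2 M 0] at h2e
  rw [det5e] at h2a h2b h2c h2d h2e
  simp only [t10, t20, t30, t40, t50, t21, t31, t41, t51, t32, t42, t52, t43, t53, t54, z0, z1, z2, z3, z4, z5] at h2a h2b h2c h2d h2e
  have h3a := h3 2
  have h3b := h3 (-2)
  have h3c := h3 1
  have h3d := h3 (-1)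
  have h3e := h3 0
  rw [B3 M 2] at h3a
  rw [B3 M (-2)] at h3b
  rw [B3 M 1] at h3c
  rw [B3 M (-1)] at h3d
  rw [B3 M 0] at h3e
  rw [det5e] at h3a h3b h3c h3d h3e
  simp only [t10, t20, t30, t40, t50, t21, t31, t41, t51, t32, t42, t52, t43, t53, t54, z0, z1, z2, z3, z4, z5] at h3a h3b h3c h3d h3e
  have h4a := h4 2
  have h4b := h4 (-2)
  have h4c := h4 1
  have h4d := h4 (-1)
  have h4e := h4 0
  rw [B4 M 2] at h4a
  rw [B4 M (-2)] at h4b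
  rw [B4 M 1] at h4c
  rw [B4 M (-1)] at h4d
  rw [B4 M 0] at h4e
  rw [det5e] at h4a h4b h4c h4d h4e
  simp only [t10, t20, t30, t40, t50, t21, t31, t41, t51, t32, t42, t52, t43, t53, t54, z0, z1, z2, z3, z4, z5] at h4a h4b h4c h4d h4e
  have h5a := h5 2
  have h5b := h5 (-2)
  have h5c := h5 1
  have h5d := h5 (-1)
  have h5e := h5 0
  rw [B5 M 2] at h5a
  rw [B5 M (-2)] at h5b
  rw [B5 M 1] at h5c
  rw [B5 M (-1)] at h5d
  rw [B5 M 0] at h5e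
  rw [det5e] at h5a h5b h5c h5d h5e
  simp only [t10, t20, t30, t40, t50, t21, t31, t41, t51, t32, t42, t52, t43, t53, t54, z0, z1, z2, z3, z4, z5] at h5a h5b h5c h5d h5e
  have t45z : M 4 5 = 0 := by linear_combination (-1/24 : ℂ) * h1a + (-1/24 : ℂ) * h1b + (1/6 : ℂ) * h1c + (1/6 : ℂ) * h1d + (-1/4 : ℂ) * h1e
  have t25z : M 2 5 = 0 := by linear_combination (-1/24 : ℂ) * h2a + (-1/24 : ℂ) * h2b + (1/6 : ℂ) * h2c + (1/6 : ℂ) * h2d + (-1/4 : ℂ) * h2e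
  have t05z : M 0 5 = 0 := by linear_combination (-1/24 : ℂ) * h3a + (-1/24 : ℂ) * h3b + (1/6 : ℂ) * h3c + (1/6 : ℂ) * h3d + (-1/4 : ℂ) * h3e
  have t35z : M 3 5 = 0 := by linear_combination (1/24 : ℂ) * h4a + (1/24 : ℂ) * h4b + (-1/6 : ℂ) * h4c + (-1/6 : ℂ) * h4d + (1/4 : ℂ) * h4e + t45z + t25z
  have t15z : M 1 5 = 0 := by linear_combination (1/24 : ℂ) * h5a + (1/24 : ℂ) * h5b + (-1/6 : ℂ) * h5c + (-1/6 : ℂ) * h5d + (1/4 : ℂ) * h5e + t25z + t05z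
  have g0 : M 5 0 = 0 := by linear_combination hsk 0 5 - t05z
  have g1 : M 5 1 = 0 := by linear_combination hsk 1 5 - t15z
  have g2 : M 5 2 = 0 := by linear_combination hsk 2 5 - t25z
  have g3 : M 5 3 = 0 := by linear_combination hsk 3 5 - t35z
  have g4 : M 5 4 = 0 := by linear_combination hsk 4 5 - t45z
  intro j
  fin_cases j <;> assumption


set_option maxHeartbeats 1000000 in
theorem main_kernel (A : Submodule ℂ Form) (hA : ∀ M ∈ A, Form.IsSkew M)
    (hrk : ∀ M ∈ A, Matrix.rank M ≤ 4)
    (g : GL (Fin 6) ℂ)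
    (hg : Submodule.map (actLin (g : Matrix (Fin 6) (Fin 6) ℂ)) pi_5 ≤ A) :
    ∃ u : W, u ≠ 0 ∧ ∀ N ∈ A, Nᵀ *ᵥ u = 0 := by
  set P : Matrix (Fin 6) (Fin 6) ℂ := ↑g⁻¹ with hPdef
  have hgP : (↑g : Matrix (Fin 6) (Fin 6) ℂ) * P = 1 := by
    rw [hPdef, ← Units.val_mul, mul_inv_cancel, Units.val_one]
  have hPg : P * (↑g : Matrix (Fin 6) (Fin 6) ℂ) = 1 := by
    rw [hPdef, ← Units.val_mul, inv_mul_cancel, Units.val_one]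
  refine ⟨P *ᵥ e 5, ?_, ?_⟩
  · intro h0
    have : (e 5 : W) = 0 := by
      have := congrArg (fun v => (↑g : Matrix (Fin 6) (Fin 6) ℂ) *ᵥ v) h0
      simpa [Matrix.mulVec_mulVec, hgP] using this
    have := congrFun this 5
    simp [e, Pi.single_apply] at this
  · intro N hN
    set M : Form := Pᵀ * N * P with hMdef
    have hskewN : Nᵀ = -N := hA N hN
    have hskM : ∀ i j : Fin 6, M j i = -M i j := by
      intro i j
      have hM : Mᵀ = -M := by
        rw [hMdef, Matrix.transpose_mul, Matrix.transpose_mul, Matrix.transpose_transpose,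
          hskewN]
        simp [Matrix.mul_assoc]
      have := congrFun (congrFun hM i) j
      simpa using this
    have hrank : ∀ Q : Form, Q ∈ pi_5 → ∀ s : ℂ, (s • Q + M).rank ≤ 4 := by
      intro Q hQ s
      have hQA : (actLin (↑g : Matrix (Fin 6) (Fin 6) ℂ)) Q ∈ A :=
        hg (Submodule.mem_map_of_mem hQ)
      have hmem : s • ((actLin (↑g : Matrix (Fin 6) (Fin 6) ℂ)) Q) + N ∈ A :=
        A.add_mem (A.smul_mem s hQA) hN
      have hr := hrk _ hmem
      have hcollapse : Pᵀ * ((↑g : Matrix (Fin 6) (Fin 6) ℂ)ᵀ * Q *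
          (↑g : Matrix (Fin 6) (Fin 6) ℂ)) * P = Q := by
        have h1 : Pᵀ * (↑g : Matrix (Fin 6) (Fin 6) ℂ)ᵀ = 1 := by
          rw [← Matrix.transpose_mul, hgP, Matrix.transpose_one]
        calc Pᵀ * ((↑g : Matrix (Fin 6) (Fin 6) ℂ)ᵀ * Q * (↑g : Matrix (Fin 6) (Fin 6) ℂ)) * P
            = (Pᵀ * (↑g : Matrix (Fin 6) (Fin 6) ℂ)ᵀ) * Q *
              ((↑g : Matrix (Fin 6) (Fin 6) ℂ) * P) := by
              simp only [Matrix.mul_assoc]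
          _ = Q := by rw [h1, hgP, Matrix.one_mul, Matrix.mul_one]
      have heq : s • Q + M = Pᵀ * (s • ((actLin (↑g : Matrix (Fin 6) (Fin 6) ℂ)) Q) + N) * P := by
        rw [Matrix.mul_add, Matrix.add_mul, hMdef]
        congr 1
        rw [Matrix.mul_smul, Matrix.smul_mul]
        simp only [actLin, LinearMap.coe_mk, AddHom.coe_mk]
        rw [hcollapse]
      rw [heq]
      exact le_trans (le_trans (Matrix.rank_mul_le_left _ _) (Matrix.rank_mul_le_right _ _)) hr
    have hrow := row5_zero M hskM
      (fun s => submatrix_det_zero _ (hrank O1 O1_mem s) _ _)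
      (fun s => submatrix_det_zero _ (hrank O2 O2_mem s) _ _)
      (fun s => submatrix_det_zero _ (hrank O3 O3_mem s) _ _)
      (fun s => submatrix_det_zero _ (hrank O4 O4_mem s) _ _)
      (fun s => submatrix_det_zero _ (hrank O5 O5_mem s) _ _)
    have hMT : Mᵀ *ᵥ e 5 = 0 := by
      funext i
      have : (Mᵀ *ᵥ e 5) i = M 5 i := by
        simp [e, Matrix.mulVec_single]
      rw [this, hrow i]
      rfl
    have hexp : Mᵀ *ᵥ e 5 = Pᵀ *ᵥ (Nᵀ *ᵥ (P *ᵥ e 5)) := by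
      rw [hMdef, Matrix.transpose_mul, Matrix.transpose_mul, Matrix.transpose_transpose]
      rw [Matrix.mulVec_mulVec, Matrix.mulVec_mulVec, Matrix.mul_assoc]
    have h0 : Pᵀ *ᵥ (Nᵀ *ᵥ (P *ᵥ e 5)) = 0 := by rw [← hexp, hMT]
    have hgPT : (↑g : Matrix (Fin 6) (Fin 6) ℂ)ᵀ * Pᵀ = 1 := by
      rw [← Matrix.transpose_mul, hPg, Matrix.transpose_one]
    calc Nᵀ *ᵥ (P *ᵥ e 5)
        = ((↑g : Matrix (Fin 6) (Fin 6) ℂ)ᵀ * Pᵀ) *ᵥ (Nᵀ *ᵥ (P *ᵥ e 5)) := by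
          rw [hgPT, Matrix.one_mulVec]
      _ = (↑g : Matrix (Fin 6) (Fin 6) ℂ)ᵀ *ᵥ (Pᵀ *ᵥ (Nᵀ *ᵥ (P *ᵥ e 5))) := by
          rw [← Matrix.mulVec_mulVec]
      _ = 0 := by rw [h0, Matrix.mulVec_zero]

/-- a linear system of generic rank ≤ 4 containing a translate of `π₅`
admits a common nonzero kernel vector; in particular it is not semistable. -/
theorem statement7 (A : Submodule ℂ Form) (hA : ∀ M ∈ A, Form.IsSkew M)
    (hrk : ∀ M ∈ A, Matrix.rank M ≤ 4)
    (g : GL (Fin 6) ℂ)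
    (hg : Submodule.map (actLin (g : Matrix (Fin 6) (Fin 6) ℂ)) pi_5 ≤ A) :
    (∃ u : W, u ≠ 0 ∧ ∀ α ∈ A, u ∈ Form.kernel α) ∧ NonSemistable A := by
  obtain ⟨u, hu0, hker⟩ := main_kernel A hA hrk g hg
  constructor
  · exact ⟨u, hu0, fun α hα => by
      simpa [Form.kernel, LinearMap.mem_ker, Matrix.mulVecLin_apply, Matrix.mulVec_transpose]
        using hker α hα⟩
  · refine ⟨1, by simp, Submodule.span ℂ {u}, ⊤, le_top, ?_, ?_, ?_⟩
    · exact finrank_span_singleton hu0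
    · rw [finrank_top]
      simp [Module.finrank_fintype_fun_eq_card]
    · intro Mm hM x hx y _
      obtain ⟨c, rfl⟩ := Submodule.mem_span_singleton.mp hx
      have h2 : u ᵥ* Mm = 0 := by
        rw [← Matrix.mulVec_transpose]
        exact hker Mm hM
      simp [Form.apply, Matrix.dotProduct_mulVec, Matrix.smul_vecMul, h2]
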